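/- Primal (dual maximization) representation: for every j = 0,...,J and any M ∈ M_D, the solution Y of the dynamic program satisfies Y_j = esssup_{r ∈ A_j} E_j[θ^{low}_j(r,M)] P-a.s., and the essential supremum is attained by any control r* ∈ A_j satisfying the optimality condition (r_i^*)^⊤ E_i[β_{i+1} Y_{i+1}] − F_i^{#}(r_i^*) = F_i(E_i[β_{i+1} Y_{i+1}]) P-a.s. for all i = j,...,J-1. -/

import Mathlib

open MeasureTheory
open scoped ENNReal

noncomputable section

variable {Ω : Type*} {m0 : MeasurableSpace Ω}

/-- `L^{∞-}`: membership in `L^p` for every finite `p ≥ 1`. -/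
def MemLinfMinus {E : Type*} [NormedAddCommGroup E] (μ : Measure Ω) (f : Ω → E) : Prop :=
  ∀ p : ℝ≥0∞, 1 ≤ p → p ≠ ⊤ → MemLp f p μ

/-- Euclidean dot product on `Fin D → ℝ`. -/
def dotp {D : ℕ} (x y : Fin D → ℝ) : ℝ := ∑ d, x d * y d

/-- Componentwise conditional expectation of an `ℝ^D`-valued random vector. -/
def cexpV (μ : Measure Ω) (m : MeasurableSpace Ω) {D : ℕ} (f : Ω → Fin D → ℝ) :
    Ω → Fin D → ℝ :=
  fun ω d => (μ[fun ω' => f ω' d|m]) ω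

/-- The `ℝ^D`-valued process `β_j Y_j` (vector weight times scalar process). -/
def bprod {D : ℕ} (β : ℕ → Ω → Fin D → ℝ) (Y : ℕ → Ω → ℝ) (j : ℕ) : Ω → Fin D → ℝ :=
  fun ω d => β j ω d * Y j ω

/-- Convex (Fenchel) conjugate, with values in `EReal`. -/
def econj {D : ℕ} (f : (Fin D → ℝ) → ℝ) (u : Fin D → ℝ) : EReal :=
  ⨆ z : Fin D → ℝ, ((dotp u z - f z : ℝ) : EReal)

/-- Real-valued version of the convex conjugate (meaningful where the conjugate is finite). -/
def rconj {D : ℕ} (f : (Fin D → ℝ) → ℝ) (u : Fin D → ℝ) : ℝ := (econj f u).toReal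

/-- The Doob martingale of an `ℝ^D`-valued process `Z`:
`j ↦ ∑_{i=0}^{j-1} (Z_{i+1} - E_i[Z_{i+1}])`. -/
def doobMart (μ : Measure Ω) (ℱ : Filtration ℕ m0) {D : ℕ} (Z : ℕ → Ω → Fin D → ℝ) :
    ℕ → Ω → Fin D → ℝ :=
  fun j ω d => ∑ i ∈ Finset.range j, (Z (i + 1) ω d - cexpV μ (ℱ i) (Z (i + 1)) ω d)

/-- Standing assumptions on the data `(F, β, ξ)` of the convex dynamic program:
measurability, adaptedness and convexity of the generator, polynomial growth with an
`L^{∞-}` coefficient, and integrability/adaptedness of the weights and terminal condition. -/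
structure Setting (μ : Measure Ω) (ℱ : Filtration ℕ m0) (J D : ℕ)
    (F : ℕ → Ω → (Fin D → ℝ) → ℝ) (β : ℕ → Ω → Fin D → ℝ) (ξ : Ω → ℝ) : Prop where
  F_meas : ∀ j < J, Measurable fun p : Ω × (Fin D → ℝ) => F j p.1 p.2
  F_adapted : ∀ j < J, ∀ z : Fin D → ℝ, StronglyMeasurable[ℱ j] fun ω => F j ω z
  F_convex : ∀ j < J, ∀ ω, ConvexOn ℝ Set.univ (F j ω)
  F_growth : ∃ q : ℝ, 0 ≤ q ∧ ∃ α : ℕ → Ω → ℝ,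
      (∀ j < J, StronglyMeasurable[ℱ j] (α j)) ∧
      (∀ j < J, ∀ᵐ ω ∂μ, 0 ≤ α j ω) ∧ (∀ j < J, MemLinfMinus μ (α j)) ∧
      ∀ j < J, ∀ z : Fin D → ℝ, ∀ᵐ ω ∂μ, |F j ω z| ≤ α j ω * (1 + ‖z‖ ^ q)
  β_adapted : ∀ j ≤ J, StronglyMeasurable[ℱ j] (β j)
  β_int : ∀ j ≤ J, MemLinfMinus μ (β j)
  ξ_meas : StronglyMeasurable[ℱ J] ξ
  ξ_int : MemLinfMinus μ ξ

/-- `Y` is an adapted `L^{∞-}` solution of the dynamic programming equation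
`Y_j = F_j(E_j[β_{j+1} Y_{j+1}])`, `Y_J = ξ`. -/
def IsSolution (μ : Measure Ω) (ℱ : Filtration ℕ m0) (J D : ℕ)
    (F : ℕ → Ω → (Fin D → ℝ) → ℝ) (β : ℕ → Ω → Fin D → ℝ) (ξ : Ω → ℝ)
    (Y : ℕ → Ω → ℝ) : Prop :=
  (∀ j ≤ J, StronglyMeasurable[ℱ j] (Y j) ∧ MemLinfMinus μ (Y j)) ∧
  (∀ᵐ ω ∂μ, Y J ω = ξ ω) ∧
  (∀ j < J, ∀ᵐ ω ∂μ, Y j ω = F j ω (cexpV μ (ℱ j) (bprod β Y (j + 1)) ω))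

/-- Supersolution of the dynamic program. -/
def IsSupersolution (μ : Measure Ω) (ℱ : Filtration ℕ m0) (J D : ℕ)
    (F : ℕ → Ω → (Fin D → ℝ) → ℝ) (β : ℕ → Ω → Fin D → ℝ) (ξ : Ω → ℝ)
    (Y : ℕ → Ω → ℝ) : Prop :=
  (∀ j ≤ J, StronglyMeasurable[ℱ j] (Y j) ∧ MemLinfMinus μ (Y j)) ∧
  (∀ᵐ ω ∂μ, ξ ω ≤ Y J ω) ∧
  (∀ j < J, ∀ᵐ ω ∂μ, F j ω (cexpV μ (ℱ j) (bprod β Y (j + 1)) ω) ≤ Y j ω)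

/-- Subsolution of the dynamic program. -/
def IsSubsolution (μ : Measure Ω) (ℱ : Filtration ℕ m0) (J D : ℕ)
    (F : ℕ → Ω → (Fin D → ℝ) → ℝ) (β : ℕ → Ω → Fin D → ℝ) (ξ : Ω → ℝ)
    (Y : ℕ → Ω → ℝ) : Prop :=
  (∀ j ≤ J, StronglyMeasurable[ℱ j] (Y j) ∧ MemLinfMinus μ (Y j)) ∧
  (∀ᵐ ω ∂μ, Y J ω ≤ ξ ω) ∧
  (∀ j < J, ∀ᵐ ω ∂μ, Y j ω ≤ F j ω (cexpV μ (ℱ j) (bprod β Y (j + 1)) ω))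

/-- The monotonicity assumption: `Y⁽¹⁾ ≥ Y⁽²⁾` a.s. implies
`F_j(β_{j+1} Y⁽¹⁾) ≥ F_j(β_{j+1} Y⁽²⁾)` a.s. -/
def MonoAssumption (μ : Measure Ω) (J D : ℕ)
    (F : ℕ → Ω → (Fin D → ℝ) → ℝ) (β : ℕ → Ω → Fin D → ℝ) : Prop :=
  ∀ j < J, ∀ Y1 Y2 : Ω → ℝ, MemLinfMinus μ Y1 → MemLinfMinus μ Y2 →
    (∀ᵐ ω ∂μ, Y2 ω ≤ Y1 ω) →
    ∀ᵐ ω ∂μ, F j ω (fun d => β (j + 1) ω d * Y2 ω) ≤ F j ω (fun d => β (j + 1) ω d * Y1 ω)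

/-- The class `M_D` of `ℝ^D`-valued `L^{∞-}` martingales. -/
def IsMartD (μ : Measure Ω) (ℱ : Filtration ℕ m0) {D : ℕ}
    (M : ℕ → Ω → Fin D → ℝ) : Prop :=
  Martingale M ℱ μ ∧ ∀ j, MemLinfMinus μ (M j)

/-- Admissible controls on the time indices `{j₀, ..., J-1}` (the class `A_{j₀}`). -/
def IsAdmissibleFrom (μ : Measure Ω) (ℱ : Filtration ℕ m0) (j₀ J D : ℕ)
    (F : ℕ → Ω → (Fin D → ℝ) → ℝ) (r : ℕ → Ω → Fin D → ℝ) : Prop :=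
  ∀ i, j₀ ≤ i → i < J →
    StronglyMeasurable[ℱ i] (r i) ∧ MemLinfMinus μ (r i) ∧
    (∀ᵐ ω ∂μ, econj (F i ω) (r i ω) ≠ ⊤) ∧
    MemLinfMinus μ (fun ω => rconj (F i ω) (r i ω))

/-- The lower pathwise recursion `θ^{low}(r, M)`:
`θ_J = ξ`, `θ_i = r_i^⊤ (β_{i+1} θ_{i+1}) - r_i^⊤ ΔM_{i+1} - F_i^{#}(r_i)`,
required on the time indices `{j₀, ..., J-1}`. -/
def IsThetaLowFrom (μ : Measure Ω) (j₀ J D : ℕ)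
    (F : ℕ → Ω → (Fin D → ℝ) → ℝ) (β : ℕ → Ω → Fin D → ℝ) (ξ : Ω → ℝ)
    (r M : ℕ → Ω → Fin D → ℝ) (θ : ℕ → Ω → ℝ) : Prop :=
  (∀ᵐ ω ∂μ, θ J ω = ξ ω) ∧
  ∀ i, j₀ ≤ i → i < J → ∀ᵐ ω ∂μ,
    θ i ω = dotp (r i ω) (fun d => β (i + 1) ω d * θ (i + 1) ω)
      - dotp (r i ω) (fun d => M (i + 1) ω d - M i ω d) - rconj (F i ω) (r i ω)

/-- The upper pathwise recursion `θ^{up}(M)`: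
`θ_J = ξ`, `θ_j = F_j(β_{j+1} θ_{j+1} - ΔM_{j+1})`. -/
def IsThetaUp (μ : Measure Ω) (J D : ℕ)
    (F : ℕ → Ω → (Fin D → ℝ) → ℝ) (β : ℕ → Ω → Fin D → ℝ) (ξ : Ω → ℝ)
    (M : ℕ → Ω → Fin D → ℝ) (θ : ℕ → Ω → ℝ) : Prop :=
  (∀ᵐ ω ∂μ, θ J ω = ξ ω) ∧
  ∀ j < J, ∀ᵐ ω ∂μ,
    θ j ω = F j ω (fun d => β (j + 1) ω d * θ (j + 1) ω - (M (j + 1) ω d - M j ω d))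

/-- The optimality condition `r_i^⊤ E_i[β_{i+1} Y_{i+1}] - F_i^{#}(r_i) = F_i(E_i[β_{i+1} Y_{i+1}])`
on the time indices `{j₀, ..., J-1}`. -/
def OptimalityCond (μ : Measure Ω) (ℱ : Filtration ℕ m0) (j₀ J D : ℕ)
    (F : ℕ → Ω → (Fin D → ℝ) → ℝ) (β : ℕ → Ω → Fin D → ℝ)
    (Y : ℕ → Ω → ℝ) (r : ℕ → Ω → Fin D → ℝ) : Prop :=
  ∀ i, j₀ ≤ i → i < J → ∀ᵐ ω ∂μ,
    dotp (r i ω) (cexpV μ (ℱ i) (bprod β Y (i + 1)) ω) - rconj (F i ω) (r i ω)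
      = F i ω (cexpV μ (ℱ i) (bprod β Y (i + 1)) ω)



/-! ### Auxiliary lemmas -/

section PrimalAux

variable {μ : Measure Ω}

theorem MemLinfMinus.integrable' [IsFiniteMeasure μ] {E : Type*} [NormedAddCommGroup E]
    {f : Ω → E} (hf : MemLinfMinus μ f) : Integrable f μ :=
  memLp_one_iff_integrable.mp (hf 1 le_rfl ENNReal.one_ne_top)

theorem MemLinfMinus.congr' {E : Type*} [NormedAddCommGroup E] {f g : Ω → E}
    (hf : MemLinfMinus μ f) (h : f =ᵐ[μ] g) : MemLinfMinus μ g :=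
  fun p hp hp' => (hf p hp hp').ae_eq h

theorem MemLinfMinus.sub' {E : Type*} [NormedAddCommGroup E] {f g : Ω → E}
    (hf : MemLinfMinus μ f) (hg : MemLinfMinus μ g) :
    MemLinfMinus μ (fun ω => f ω - g ω) :=
  fun p hp hp' => (hf p hp hp').sub (hg p hp hp')

theorem MemLinfMinus.mul' {f g : Ω → ℝ} (hf : MemLinfMinus μ f) (hg : MemLinfMinus μ g) :
    MemLinfMinus μ (fun ω => f ω * g ω) := by
  intro p hp hp'
  have h2 : (1 : ℝ≥0∞) ≤ 2 * p := hp.trans (le_mul_of_one_le_left zero_le one_le_two)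
  have h2' : (2 : ℝ≥0∞) * p ≠ ⊤ := ENNReal.mul_ne_top (by norm_num) hp'
  have heq : 1 / p = 1 / (2 * p) + 1 / (2 * p) := by
    rw [ENNReal.div_add_div_same]
    have := ENNReal.mul_div_mul_left (c := (2 : ℝ≥0∞)) 1 p two_ne_zero ENNReal.ofNat_ne_top
    rw [← this]; norm_num
  haveI : ENNReal.HolderTriple (2 * p) (2 * p) p := ⟨by simpa [one_div] using heq.symm⟩
  exact ((hg (2 * p) h2 h2').smul (hf (2 * p) h2 h2') : MemLp (f • g) p μ)

theorem MemLinfMinus.comp_proj {D : ℕ} {f : Ω → Fin D → ℝ} (hf : MemLinfMinus μ f) (d : Fin D) :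
    MemLinfMinus μ (fun ω => f ω d) := fun p hp hp' =>
  (ContinuousLinearMap.proj (R := ℝ) (φ := fun _ : Fin D => ℝ) d).comp_memLp' (hf p hp hp')

theorem MemLinfMinus.dotp' {D : ℕ} {f g : Ω → Fin D → ℝ} (hf : MemLinfMinus μ f)
    (hg : MemLinfMinus μ g) : MemLinfMinus μ (fun ω => dotp (f ω) (g ω)) := by
  intro p hp hp'
  have h : ∀ d : Fin D, MemLp (fun ω => f ω d * g ω d) p μ :=
    fun d => ((hf.comp_proj d).mul' (hg.comp_proj d)) p hp hp'
  have := memLp_finset_sum (μ := μ) Finset.univ (fun d (_ : d ∈ Finset.univ) => h d)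
  simpa [dotp] using this

theorem memLinfMinus_const [IsFiniteMeasure μ] (c : ℝ) : MemLinfMinus μ (fun _ => c) :=
  fun _ _ _ => memLp_const c

theorem fenchelYoung {D : ℕ} {f : (Fin D → ℝ) → ℝ} {u : Fin D → ℝ}
    (h : econj f u ≠ ⊤) (z : Fin D → ℝ) : dotp u z - f z ≤ rconj f u := by
  have hle : ((dotp u z - f z : ℝ) : EReal) ≤ econj f u :=
    le_iSup (fun z => (((dotp u z - f z : ℝ)) : EReal)) z
  have h2 := EReal.toReal_le_toReal hle (EReal.coe_ne_bot _) h
  rw [EReal.toReal_coe] at h2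
  exact h2

theorem dotp_smul_right {D : ℕ} (u v : Fin D → ℝ) (c : ℝ) :
    dotp u (fun d => v d * c) = dotp u v * c := by
  simp [dotp, Finset.sum_mul, mul_assoc]

/-- Nonnegativity of `r⊤β` for controls with finite conjugate, under the monotonicity
assumption. -/
theorem dotp_beta_nonneg [IsProbabilityMeasure μ] {J D : ℕ}
    {F : ℕ → Ω → (Fin D → ℝ) → ℝ} {β : ℕ → Ω → Fin D → ℝ}
    (hmono : MonoAssumption μ J D F β) {j : ℕ} (hj : j < J) {u : Ω → Fin D → ℝ}
    (hfin : ∀ᵐ ω ∂μ, econj (F j ω) (u ω) ≠ ⊤) :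
    ∀ᵐ ω ∂μ, 0 ≤ dotp (u ω) (β (j + 1) ω) := by
  have hmo : ∀ᵐ ω ∂μ, ∀ n : ℕ,
      F j ω (fun d => β (j + 1) ω d * (-(n : ℝ))) ≤ F j ω (fun d => β (j + 1) ω d * 0) := by
    rw [ae_all_iff]
    intro n
    exact hmono j hj (fun _ => 0) (fun _ => -(n : ℝ)) (memLinfMinus_const 0)
      (memLinfMinus_const _) (Filter.Eventually.of_forall fun ω => by
        simp)
  filter_upwards [hmo, hfin] with ω hω hωfin
  by_contra hneg
  push_neg at hneg
  have hn : ∀ n : ℕ, (n : ℝ) * (-(dotp (u ω) (β (j + 1) ω))) ≤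
      rconj (F j ω) (u ω) + F j ω (fun d => β (j + 1) ω d * 0) := by
    intro n
    have h1 := fenchelYoung hωfin (fun d => β (j + 1) ω d * (-(n : ℝ)))
    rw [dotp_smul_right] at h1
    have h2 := hω n
    have h3 : (n : ℝ) * (-(dotp (u ω) (β (j + 1) ω)))
        = dotp (u ω) (β (j + 1) ω) * (-(n : ℝ)) := by ring
    linarith
  obtain ⟨n, hn'⟩ := exists_nat_gt
    ((rconj (F j ω) (u ω) + F j ω (fun d => β (j + 1) ω d * 0)) / (-(dotp (u ω) (β (j + 1) ω))))
  have hg : (0 : ℝ) < -(dotp (u ω) (β (j + 1) ω)) := by linarith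
  have := (div_lt_iff₀ hg).mp hn'
  linarith [hn n]

/-- Componentwise martingale property. -/
theorem martingale_comp_condExp [IsProbabilityMeasure μ] {ℱ : Filtration ℕ m0} {D : ℕ}
    {M : ℕ → Ω → Fin D → ℝ} (hM : Martingale M ℱ μ) (hint : ∀ j, Integrable (M j) μ)
    (i : ℕ) (d : Fin D) :
    (μ[fun ω => M (i + 1) ω d|ℱ i]) =ᵐ[μ] fun ω => M i ω d := by
  refine (ae_eq_condExp_of_forall_setIntegral_eq (ℱ.le i)
    ((ContinuousLinearMap.proj (R := ℝ) (φ := fun _ : Fin D => ℝ) d).integrable_comp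
      (hint (i + 1)))
    (fun s _ _ => ((ContinuousLinearMap.proj (R := ℝ) (φ := fun _ : Fin D => ℝ) d).integrable_comp
      (hint i)).integrableOn)
    (fun s hs _ => ?_)
    (StronglyMeasurable.aestronglyMeasurable
      ((continuous_apply d).comp_stronglyMeasurable (hM.stronglyAdapted i)))).symm
  have h1 : ∫ x in s, M i x ∂μ = ∫ x in s, M (i + 1) x ∂μ :=
    hM.setIntegral_eq (Nat.le_succ i) hs
  have e1 : ∫ x in s, M i x d ∂μ
      = (ContinuousLinearMap.proj (R := ℝ) (φ := fun _ : Fin D => ℝ) d) (∫ x in s, M i x ∂μ) :=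
    (ContinuousLinearMap.proj (R := ℝ) (φ := fun _ : Fin D => ℝ) d).integral_comp_comm
      ((hint i).integrableOn)
  have e2 : ∫ x in s, M (i + 1) x d ∂μ
      = (ContinuousLinearMap.proj (R := ℝ) (φ := fun _ : Fin D => ℝ) d)
          (∫ x in s, M (i + 1) x ∂μ) :=
    (ContinuousLinearMap.proj (R := ℝ) (φ := fun _ : Fin D => ℝ) d).integral_comp_comm
      ((hint (i + 1)).integrableOn)
  show ∫ x in s, M i x d ∂μ = ∫ x in s, M (i + 1) x d ∂μ
  rw [e1, e2, h1]

end PrimalAux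


/-- The key backward induction: for any admissible control, the conditional expectation of the
lower recursion is dominated by `Y`, with equality under the optimality condition. -/
theorem primal_key
    (μ : Measure Ω) [IsProbabilityMeasure μ] (ℱ : Filtration ℕ m0)
    (J D : ℕ) (F : ℕ → Ω → (Fin D → ℝ) → ℝ) (β : ℕ → Ω → Fin D → ℝ) (ξ : Ω → ℝ)
    (hset : Setting μ ℱ J D F β ξ) (hmono : MonoAssumption μ J D F β)
    (Y : ℕ → Ω → ℝ) (hY : IsSolution μ ℱ J D F β ξ Y)
    (M : ℕ → Ω → Fin D → ℝ) (hM : IsMartD μ ℱ M) :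
    ∀ n j, j + n = J → ∀ r θ, IsAdmissibleFrom μ ℱ j J D F r →
      IsThetaLowFrom μ j J D F β ξ r M θ →
      MemLinfMinus μ (θ j) ∧ ((μ[θ j|ℱ j]) ≤ᵐ[μ] Y j) ∧
      (OptimalityCond μ ℱ j J D F β Y r → (μ[θ j|ℱ j]) =ᵐ[μ] Y j) := by
  intro n
  induction n with
  | zero =>
    intro j hjJ r θ _ hθ
    have hjJ' : j = J := by omega
    subst hjJ'
    have hθJ : θ j =ᵐ[μ] ξ := hθ.1
    have heq : (μ[θ j|ℱ j]) =ᵐ[μ] Y j := by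
      refine (condExp_congr_ae hθJ).trans ?_
      rw [condExp_of_stronglyMeasurable (ℱ.le j) hset.ξ_meas hset.ξ_int.integrable']
      exact Filter.EventuallyEq.symm (hY.2.1 : Y j =ᵐ[μ] ξ)
    exact ⟨hset.ξ_int.congr' hθJ.symm, heq.le, fun _ => heq⟩
  | succ n ih =>
    intro j hjJ r θ hadm hθ
    have hj : j < J := by omega
    have hj1 : j + 1 ≤ J := hj
    obtain ⟨hθ1Lp, hle1, heq1⟩ := ih (j + 1) (by omega) r θ
      (fun i hi hiJ => hadm i (by omega) hiJ)
      ⟨hθ.1, fun i hi hiJ => hθ.2 i (by omega) hiJ⟩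
    obtain ⟨hrm, hrLp, hfin, hCLp⟩ := hadm j le_rfl hj
    -- basic `L^{∞-}` facts
    have hβLp : MemLinfMinus μ (β (j + 1)) := hset.β_int (j + 1) hj1
    have hgLp : MemLinfMinus μ (fun ω => dotp (r j ω) (β (j + 1) ω)) := hrLp.dotp' hβLp
    have hYLp1 : MemLinfMinus μ (Y (j + 1)) := (hY.1 (j + 1) hj1).2
    have hΔLp : MemLinfMinus μ (fun ω => (fun d => M (j + 1) ω d - M j ω d)) :=
      (hM.2 (j + 1)).sub' (hM.2 j)
    have hBLp : MemLinfMinus μ (fun ω => dotp (r j ω) (fun d => M (j + 1) ω d - M j ω d)) :=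
      hrLp.dotp' hΔLp
    have hALp : MemLinfMinus μ (fun ω => dotp (r j ω) (β (j + 1) ω) * θ (j + 1) ω) :=
      hgLp.mul' hθ1Lp
    -- rewritten recursion
    have hrec : θ j =ᵐ[μ] fun ω => dotp (r j ω) (β (j + 1) ω) * θ (j + 1) ω
        - dotp (r j ω) (fun d => M (j + 1) ω d - M j ω d) - rconj (F j ω) (r j ω) := by
      filter_upwards [hθ.2 j le_rfl hj] with ω hω
      rw [hω, dotp_smul_right]
    have hθjLp : MemLinfMinus μ (θ j) :=
      ((hALp.sub' hBLp).sub' hCLp).congr' hrec.symm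
    -- integrability
    have iθ1 : Integrable (θ (j + 1)) μ := hθ1Lp.integrable'
    have iA : Integrable (fun ω => dotp (r j ω) (β (j + 1) ω) * θ (j + 1) ω) μ := hALp.integrable'
    have iB : Integrable (fun ω => dotp (r j ω) (fun d => M (j + 1) ω d - M j ω d)) μ :=
      hBLp.integrable'
    have iC : Integrable (fun ω => rconj (F j ω) (r j ω)) μ := hCLp.integrable'
    have iGY : Integrable (fun ω => dotp (r j ω) (β (j + 1) ω) * Y (j + 1) ω) μ :=
      (hgLp.mul' hYLp1).integrable'
    -- splitting of the conditional expectation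
    have hsplit : (μ[θ j|ℱ j]) =ᵐ[μ]
        (μ[fun ω => dotp (r j ω) (β (j + 1) ω) * θ (j + 1) ω|ℱ j])
        - (μ[fun ω => dotp (r j ω) (fun d => M (j + 1) ω d - M j ω d)|ℱ j])
        - (μ[fun ω => rconj (F j ω) (r j ω)|ℱ j]) := by
      refine (condExp_congr_ae hrec).trans ?_
      have h2 := condExp_sub (μ := μ) (m := ℱ j)
        (f := fun ω => dotp (r j ω) (β (j + 1) ω) * θ (j + 1) ω
          - dotp (r j ω) (fun d => M (j + 1) ω d - M j ω d))
        (g := fun ω => rconj (F j ω) (r j ω)) (iA.sub iB) iC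
      have h3 := condExp_sub (μ := μ) (m := ℱ j)
        (f := fun ω => dotp (r j ω) (β (j + 1) ω) * θ (j + 1) ω)
        (g := fun ω => dotp (r j ω) (fun d => M (j + 1) ω d - M j ω d)) iA iB
      exact h2.trans (h3.sub (Filter.EventuallyEq.rfl))
    -- the martingale term vanishes
    have hB0 : (μ[fun ω => dotp (r j ω) (fun d => M (j + 1) ω d - M j ω d)|ℱ j]) =ᵐ[μ]
        (0 : Ω → ℝ) := by
      have hper : ∀ d : Fin D,
          (μ[fun ω => r j ω d * (M (j + 1) ω d - M j ω d)|ℱ j]) =ᵐ[μ] (0 : Ω → ℝ) := by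
        intro d
        have hΔ : (μ[fun ω => M (j + 1) ω d - M j ω d|ℱ j]) =ᵐ[μ] (0 : Ω → ℝ) := by
          have hsub := condExp_sub (μ := μ) (m := ℱ j)
            (f := fun ω => M (j + 1) ω d) (g := fun ω => M j ω d)
            (((hM.2 (j + 1)).comp_proj d).integrable') (((hM.2 j).comp_proj d).integrable')
          have hm1 := martingale_comp_condExp hM.1 (fun k => (hM.2 k).integrable') j d
          have hm2 : (μ[fun ω => M j ω d|ℱ j]) = fun ω => M j ω d :=
            condExp_of_stronglyMeasurable (ℱ.le j)
              ((continuous_apply d).comp_stronglyMeasurable (hM.1.stronglyAdapted j))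
              (((hM.2 j).comp_proj d).integrable')
          refine hsub.trans ?_
          rw [hm2]
          filter_upwards [hm1] with ω h1
          simp only [Pi.sub_apply, Pi.zero_apply]
          rw [h1]
          ring
        have hmul := condExp_mul_of_stronglyMeasurable_left (μ := μ) (m := ℱ j)
          (f := fun ω => r j ω d) (g := fun ω => M (j + 1) ω d - M j ω d)
          ((continuous_apply d).comp_stronglyMeasurable hrm)
          (((hrLp.comp_proj d).mul' (((hM.2 (j + 1)).comp_proj d).sub'
            ((hM.2 j).comp_proj d))).integrable')
          ((((hM.2 (j + 1)).comp_proj d).sub' ((hM.2 j).comp_proj d)).integrable')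
        refine hmul.trans ?_
        filter_upwards [hΔ] with ω h1
        simp only [Pi.mul_apply, Pi.zero_apply] at h1 ⊢
        rw [h1, mul_zero]
      have hrw : (fun ω => dotp (r j ω) (fun d => M (j + 1) ω d - M j ω d))
          = ∑ d : Fin D, fun ω => r j ω d * (M (j + 1) ω d - M j ω d) := by
        funext ω; simp [dotp, Finset.sum_apply]
      rw [hrw]
      refine (condExp_finset_sum (fun d _ =>
        (((hrLp.comp_proj d).mul' (((hM.2 (j + 1)).comp_proj d).sub'
          ((hM.2 j).comp_proj d))).integrable')) (ℱ j)).trans ?_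
      filter_upwards [ae_all_iff.mpr hper] with ω hω
      simp only [Finset.sum_apply, Pi.zero_apply]
      refine Finset.sum_eq_zero fun d _ => ?_
      simpa using hω d
    -- pull-out of `r⊤β` at time `j+1`
    have hgsm : StronglyMeasurable[ℱ (j + 1)] (fun ω => dotp (r j ω) (β (j + 1) ω)) := by
      simp only [dotp]
      apply Finset.stronglyMeasurable_fun_sum
      intro d _
      exact ((continuous_apply d).comp_stronglyMeasurable
        (hrm.mono (ℱ.mono (Nat.le_succ j)))).mul
        ((continuous_apply d).comp_stronglyMeasurable (hset.β_adapted (j + 1) hj1))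
    have hApull : (μ[fun ω => dotp (r j ω) (β (j + 1) ω) * θ (j + 1) ω|ℱ (j + 1)]) =ᵐ[μ]
        (fun ω => dotp (r j ω) (β (j + 1) ω)) * (μ[θ (j + 1)|ℱ (j + 1)]) :=
      condExp_mul_of_stronglyMeasurable_left hgsm iA iθ1
    have htow : (μ[fun ω => dotp (r j ω) (β (j + 1) ω) * θ (j + 1) ω|ℱ j]) =ᵐ[μ]
        (μ[μ[fun ω => dotp (r j ω) (β (j + 1) ω) * θ (j + 1) ω|ℱ (j + 1)]|ℱ j]) :=
      (condExp_condExp_of_le (ℱ.mono (Nat.le_succ j)) (ℱ.le (j + 1))).symm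
    -- `E_j[(r⊤β) Y_{j+1}] = r⊤ E_j[β Y_{j+1}]`
    have hGY : (μ[fun ω => dotp (r j ω) (β (j + 1) ω) * Y (j + 1) ω|ℱ j]) =ᵐ[μ]
        fun ω => dotp (r j ω) (cexpV μ (ℱ j) (bprod β Y (j + 1)) ω) := by
      have hper : ∀ d : Fin D,
          (μ[fun ω => r j ω d * bprod β Y (j + 1) ω d|ℱ j]) =ᵐ[μ]
            fun ω => r j ω d * cexpV μ (ℱ j) (bprod β Y (j + 1)) ω d := by
        intro d
        have hbLp : MemLinfMinus μ (fun ω => bprod β Y (j + 1) ω d) :=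
          (hβLp.comp_proj d).mul' hYLp1
        have hmul := condExp_mul_of_stronglyMeasurable_left (μ := μ) (m := ℱ j)
          (f := fun ω => r j ω d) (g := fun ω => bprod β Y (j + 1) ω d)
          ((continuous_apply d).comp_stronglyMeasurable hrm)
          (((hrLp.comp_proj d).mul' hbLp).integrable') hbLp.integrable'
        exact hmul.trans (Filter.Eventually.of_forall fun ω => rfl)
      have hrw : (fun ω => dotp (r j ω) (β (j + 1) ω) * Y (j + 1) ω)
          = ∑ d : Fin D, fun ω => r j ω d * bprod β Y (j + 1) ω d := by
        funext ω; simp [dotp, bprod, Finset.sum_apply, Finset.sum_mul, mul_assoc]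
      rw [hrw]
      refine (condExp_finset_sum (fun d _ =>
        ((hrLp.comp_proj d).mul' ((hβLp.comp_proj d).mul' hYLp1)).integrable') (ℱ j)).trans ?_
      filter_upwards [ae_all_iff.mpr hper] with ω hω
      simp only [Finset.sum_apply]
      show _ = dotp (r j ω) (cexpV μ (ℱ j) (bprod β Y (j + 1)) ω)
      simp only [dotp]
      exact Finset.sum_congr rfl fun d _ => hω d
    -- the conjugate term dominates `r⊤ E_j[β Y_{j+1}] - Y_j`
    have hhsm : StronglyMeasurable[ℱ j]
        (fun ω => dotp (r j ω) (cexpV μ (ℱ j) (bprod β Y (j + 1)) ω) - Y j ω) := by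
      refine StronglyMeasurable.sub ?_ (hY.1 j (le_of_lt hj)).1
      simp only [dotp]
      apply Finset.stronglyMeasurable_fun_sum
      intro d _
      refine ((continuous_apply d).comp_stronglyMeasurable hrm).mul ?_
      exact (stronglyMeasurable_condExp (m := ℱ j)
        (f := fun ω' => bprod β Y (j + 1) ω' d) (μ := μ))
    have hhint : Integrable
        (fun ω => dotp (r j ω) (cexpV μ (ℱ j) (bprod β Y (j + 1)) ω) - Y j ω) μ := by
      refine Integrable.congr
        ((integrable_condExp (f := fun ω => dotp (r j ω) (β (j + 1) ω) * Y (j + 1) ω)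
          (m := ℱ j) (μ := μ)).sub ((hY.1 j (le_of_lt hj)).2.integrable')) ?_
      filter_upwards [hGY] with ω h1
      simp only [Pi.sub_apply]
      rw [h1]
    have hCge : (fun ω => dotp (r j ω) (cexpV μ (ℱ j) (bprod β Y (j + 1)) ω) - Y j ω)
        ≤ᵐ[μ] fun ω => rconj (F j ω) (r j ω) := by
      filter_upwards [hfin, hY.2.2 j hj] with ω h1 h2
      have := fenchelYoung h1 (cexpV μ (ℱ j) (bprod β Y (j + 1)) ω)
      rw [h2]
      exact this
    have hCcond : (fun ω => dotp (r j ω) (cexpV μ (ℱ j) (bprod β Y (j + 1)) ω) - Y j ω)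
        ≤ᵐ[μ] (μ[fun ω => rconj (F j ω) (r j ω)|ℱ j]) := by
      have := condExp_mono (μ := μ) (m := ℱ j) hhint iC hCge
      rwa [condExp_of_stronglyMeasurable (ℱ.le j) hhsm hhint] at this
    -- nonnegativity of `r⊤β` and the inequality
    have hgnn : ∀ᵐ ω ∂μ, 0 ≤ dotp (r j ω) (β (j + 1) ω) := dotp_beta_nonneg hmono hj hfin
    have hAle : (μ[fun ω => dotp (r j ω) (β (j + 1) ω) * θ (j + 1) ω|ℱ j]) ≤ᵐ[μ]
        fun ω => dotp (r j ω) (cexpV μ (ℱ j) (bprod β Y (j + 1)) ω) := by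
      refine htow.le.trans ?_
      refine (condExp_mono integrable_condExp iGY ?_).trans hGY.le
      filter_upwards [hApull, hle1, hgnn] with ω h1 h2 h3
      simp only [Pi.mul_apply] at h1
      rw [h1]
      exact mul_le_mul_of_nonneg_left h2 h3
    have hfinal_le : (μ[θ j|ℱ j]) ≤ᵐ[μ] Y j := by
      filter_upwards [hsplit, hB0, hAle, hCcond] with ω e0 e1 e2 e3
      simp only [Pi.sub_apply, Pi.zero_apply] at e0 e1
      rw [e0, e1]
      linarith
    refine ⟨hθjLp, hfinal_le, fun hopt => ?_⟩
    -- equality under the optimality condition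
    have heq1' : (μ[θ (j + 1)|ℱ (j + 1)]) =ᵐ[μ] Y (j + 1) :=
      heq1 (fun i hi hiJ => hopt i (by omega) hiJ)
    have hAeq : (μ[fun ω => dotp (r j ω) (β (j + 1) ω) * θ (j + 1) ω|ℱ j]) =ᵐ[μ]
        fun ω => dotp (r j ω) (cexpV μ (ℱ j) (bprod β Y (j + 1)) ω) := by
      refine htow.trans ?_
      refine (condExp_congr_ae ?_).trans hGY
      refine hApull.trans ?_
      filter_upwards [heq1'] with ω h1
      simp only [Pi.mul_apply]
      rw [h1]
    have hCeq : (μ[fun ω => rconj (F j ω) (r j ω)|ℱ j]) =ᵐ[μ]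
        fun ω => dotp (r j ω) (cexpV μ (ℱ j) (bprod β Y (j + 1)) ω) - Y j ω := by
      have hCh : (fun ω => rconj (F j ω) (r j ω)) =ᵐ[μ]
          fun ω => dotp (r j ω) (cexpV μ (ℱ j) (bprod β Y (j + 1)) ω) - Y j ω := by
        filter_upwards [hopt j le_rfl hj, hY.2.2 j hj] with ω h1 h2
        rw [h2]; linarith
      refine (condExp_congr_ae hCh).trans ?_
      rw [condExp_of_stronglyMeasurable (ℱ.le j) hhsm hhint]
    filter_upwards [hsplit, hB0, hAeq, hCeq] with ω e0 e1 e2 e3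
    simp only [Pi.sub_apply, Pi.zero_apply] at e0 e1
    rw [e0, e1, e2, e3]
    ring

/-- Primal representation: for every `j` and any `M ∈ M_D`, the solution `Y`
satisfies `Y_j = esssup_{r ∈ A_j} E_j[θ^{low}_j(r,M)]` `P`-a.s.: every admissible control `r`
gives `E_j[θ^{low}_j(r,M)] ≤ Y_j` a.s., and every control `r*` satisfying the optimality
condition attains the essential supremum: `E_j[θ^{low}_j(r*,M)] = Y_j` a.s. -/
theorem primal_representation
    (μ : Measure Ω) [IsProbabilityMeasure μ] (ℱ : Filtration ℕ m0)
    (J D : ℕ) (F : ℕ → Ω → (Fin D → ℝ) → ℝ) (β : ℕ → Ω → Fin D → ℝ) (ξ : Ω → ℝ)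
    (hset : Setting μ ℱ J D F β ξ) (hmono : MonoAssumption μ J D F β)
    (Y : ℕ → Ω → ℝ) (hY : IsSolution μ ℱ J D F β ξ Y)
    (M : ℕ → Ω → Fin D → ℝ) (hM : IsMartD μ ℱ M) :
    ∀ j ≤ J,
      (∀ r : ℕ → Ω → Fin D → ℝ, ∀ θ : ℕ → Ω → ℝ,
        IsAdmissibleFrom μ ℱ j J D F r → IsThetaLowFrom μ j J D F β ξ r M θ →
        ∀ᵐ ω ∂μ, (μ[θ j|ℱ j]) ω ≤ Y j ω) ∧
      (∀ r : ℕ → Ω → Fin D → ℝ, ∀ θ : ℕ → Ω → ℝ,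
        IsAdmissibleFrom μ ℱ j J D F r → OptimalityCond μ ℱ j J D F β Y r →
        IsThetaLowFrom μ j J D F β ξ r M θ →
        (μ[θ j|ℱ j]) =ᵐ[μ] Y j) := by
  intro j hj
  refine ⟨fun r θ hadm hθ => ?_, fun r θ hadm hopt hθ => ?_⟩
  · exact (primal_key μ ℱ J D F β ξ hset hmono Y hY M hM (J - j) j (by omega) r θ
      hadm hθ).2.1
  · exact (primal_key μ ℱ J D F β ξ hset hmono Y hY M hM (J - j) j (by omega) r θ
      hadm hθ).2.2 hopt

end
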